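/- Let Σ₁, Σ₂ be sets and L_i = MO_{Σ_i} (the simple closure space containing only ∅, Σ_i and singletons). Then L₁∘L₂ := (L₁ ⊼ L₂) ∪ {R ⊆ Σ₁×Σ₂ | |R| = 3 and distinct elements of R differ in both coordinates} is a weak tensor product of L₁ and L₂ that has the covering property. -/
import Mathlib


open Set

/-- A simple closure space on `σ`: a family of subsets closed under arbitrary
intersections (the empty intersection giving `univ`), containing `∅` and all singletons. -/
def IsSCS {σ : Type*} (L : Set (Set σ)) : Prop :=
  (∀ ω ⊆ L, ⋂₀ ω ∈ L) ∧ (∅ : Set σ) ∈ L ∧ ∀ p : σ, {p} ∈ L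

/-- The join of a subset `A` of atoms/points in a simple closure space `L`. -/
def sJoin {σ : Type*} (L : Set (Set σ)) (A : Set σ) : Set σ := ⋂₀ {b ∈ L | A ⊆ b}

/-- `b` covers `a` in `L`. -/
def CoversIn {σ : Type*} (L : Set (Set σ)) (a b : Set σ) : Prop :=
  a ⊂ b ∧ ∀ c ∈ L, a ⊆ c → c ⊆ b → c = a ∨ c = b

/-- `x` is a coatom of `L`. -/
def IsCoatomOf {σ : Type*} (L : Set (Set σ)) (x : Set σ) : Prop :=
  x ∈ L ∧ x ≠ univ ∧ ∀ c ∈ L, x ⊆ c → c = x ∨ c = univ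

/-- `L` is coatomistic: every element is a meet of coatoms. -/
def Coatomistic {σ : Type*} (L : Set (Set σ)) : Prop :=
  ∀ a ∈ L, a = ⋂₀ {x | IsCoatomOf L x ∧ a ⊆ x}

/-- Covering property: for any atom `p` and `a ∈ L` with `p ∧ a = 0`,
`p ∨ a` covers `a`. -/
def HasCovProp {σ : Type*} (L : Set (Set σ)) : Prop :=
  ∀ p : σ, ∀ a ∈ L, p ∉ a → CoversIn L a (sJoin L (insert p a))

/-- Covering property of the dual lattice of `L`. -/
def HasDualCovProp {σ : Type*} (L : Set (Set σ)) : Prop :=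
  ∀ x, IsCoatomOf L x → ∀ a ∈ L, sJoin L (x ∪ a) = univ → CoversIn L (x ∩ a) a

/-- `f` is an orthocomplementation of `L`: an order-reversing involution with
`a ∨ f a = 1` for all `a ∈ L`. -/
def IsOrthoOn {σ : Type*} (L : Set (Set σ)) (f : Set σ → Set σ) : Prop :=
  (∀ a ∈ L, f a ∈ L) ∧ (∀ a ∈ L, f (f a) = a) ∧
  (∀ a ∈ L, ∀ b ∈ L, a ⊆ b → f b ⊆ f a) ∧
  (∀ a ∈ L, ∀ b ∈ L, a ∪ f a ⊆ b → b = univ)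

/-- The permutation `g` of the points induces an automorphism of `L`. -/
def IsAutoOn {σ : Type*} (L : Set (Set σ)) (g : Equiv.Perm σ) : Prop :=
  ∀ a, a ∈ L ↔ g '' a ∈ L

/-- `L` contains `MO₃`: three distinct atoms `p, q, r` such that `p ∨ q`
covers each of them. -/
def ContainsMO3 {σ : Type*} (L : Set (Set σ)) : Prop :=
  ∃ p q r : σ, p ≠ q ∧ p ≠ r ∧ q ≠ r ∧
    CoversIn L {p} (sJoin L {p, q}) ∧ CoversIn L {q} (sJoin L {p, q}) ∧
    CoversIn L {r} (sJoin L {p, q})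

/-- `L` contains `MO₄`: four distinct atoms `p, q, r, s` such that `p ∨ q`
covers each of them. -/
def ContainsMO4 {σ : Type*} (L : Set (Set σ)) : Prop :=
  ∃ p q r s : σ, p ≠ q ∧ p ≠ r ∧ p ≠ s ∧ q ≠ r ∧ q ≠ s ∧ r ≠ s ∧
    CoversIn L {p} (sJoin L {p, q}) ∧ CoversIn L {q} (sJoin L {p, q}) ∧
    CoversIn L {r} (sJoin L {p, q}) ∧ CoversIn L {s} (sJoin L {p, q})

/-- A connected covering of the point set of `L`. -/
def IsConnCover {σ : Type*} (L : Set (Set σ)) (𝒜 : Set (Set σ)) : Prop :=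
  ⋃₀ 𝒜 = Set.univ ∧
  (∀ A ∈ 𝒜, ∃ p q : σ, p ∈ A ∧ q ∈ A ∧ p ≠ q) ∧
  (∀ A ∈ 𝒜, ∀ p ∈ A, ∀ q ∈ A, p ≠ q → ∃ r, r ∈ sJoin L {p, q} ∧ r ≠ p ∧ r ≠ q) ∧
  (∀ p q : σ, ∃ n : ℕ, ∃ c : Fin (n + 1) → Set σ, (∀ i, c i ∈ 𝒜) ∧
    p ∈ c 0 ∧ q ∈ c (Fin.last n) ∧
    ∀ i : Fin n, ∃ x y : σ, x ≠ y ∧ (x ∈ c i.castSucc ∧ x ∈ c i.succ) ∧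
      (y ∈ c i.castSucc ∧ y ∈ c i.succ))

/-- `L` is weakly connected: `L ≠ 2` and there is a connected covering. -/
def WeaklyConnected {σ : Type*} (L : Set (Set σ)) : Prop :=
  (∃ p q : σ, p ≠ q) ∧ ∃ 𝒜, IsConnCover L 𝒜

/-- Restriction of `L` to the subset `e`, as a family of subsets of `↥e`. -/
def restrictCS {σ : Type*} (L : Set (Set σ)) (e : Set σ) : Set (Set e) :=
  {B | ∃ a ∈ L, a ⊆ e ∧ B = Subtype.val ⁻¹' a}

/-- Center of an orthocomplemented simple closure space: elements whose
orthocomplement is the set complement. -/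
def centerOf {σ : Type*} (L : Set (Set σ)) (f : Set σ → Set σ) : Set (Set σ) :=
  {a ∈ L | f a = aᶜ}

/-- Central cover of a point `p`. -/
def centralCover {σ : Type*} (L : Set (Set σ)) (f : Set σ → Set σ) (p : σ) : Set σ :=
  ⋂₀ {a ∈ centerOf L f | p ∈ a}

section Family

variable {Ω : Type*} {X : Ω → Type*}

/-- `⋃_α π_α⁻¹ (a α)`. -/
def cylUnion (a : ∀ α, Set (X α)) : Set (∀ α, X α) := {p | ∃ α, p α ∈ a α}

/-- `p[B, β]`: the point `p` with its `β`-th coordinate varying over `B`. -/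
def pSub (p : ∀ α, X α) (β : Ω) (B : Set (X β)) : Set (∀ α, X α) :=
  {q | q β ∈ B ∧ ∀ α, α ≠ β → q α = p α}

/-- The section `R_β[p]` of `R ⊆ ∏_α X α`. -/
def sect (R : Set (∀ α, X α)) (β : Ω) (p : ∀ α, X α) : Set (X β) :=
  {q | ∃ r ∈ R, r β = q ∧ ∀ α, α ≠ β → r α = p α}

/-- The box product `⊼_α L_α`: all nonempty intersections of the sets
`⋃_α π_α⁻¹ (a α)`. -/
def boxProd (L : ∀ α, Set (Set (X α))) : Set (Set (∀ α, X α)) :=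
  {A | ∃ ω ⊆ {B | ∃ a : ∀ α, Set (X α), (∀ α, a α ∈ L α) ∧ B = cylUnion a},
    ω.Nonempty ∧ A = ⋂₀ ω}

/-- The Fraser product `⊻_α L_α`: all `R` whose sections all lie in the factors. -/
def fraserProd (L : ∀ α, Set (Set (X α))) : Set (Set (∀ α, X α)) :=
  {R | ∀ β, ∀ p : ∀ α, X α, sect R β p ∈ L β}

/-- `M` is a weak tensor product of the family `L`: axioms P1–P3. -/
def IsWTP (L : ∀ α, Set (Set (X α))) (M : Set (Set (∀ α, X α))) : Prop :=
  IsSCS M ∧ (∀ a : ∀ α, Set (X α), (∀ α, a α ∈ L α) → cylUnion a ∈ M) ∧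
  (∀ p : ∀ α, X α, ∀ β, ∀ B : Set (X β), pSub p β B ∈ M → B ∈ L β)

/-- The closure operator `⋁_β R = ⋃_p p[⋁ R_β[p]]`. -/
def vJoin (L : ∀ α, Set (Set (X α))) (β : Ω) (R : Set (∀ α, X α)) : Set (∀ α, X α) :=
  ⋃ p : ∀ α, X α, pSub p β (sJoin (L β) (sect R β p))

/-- The orthocomplementation `#` induced on the box product by
orthocomplementations of the factors. -/
def sharp (f : ∀ α, Set (X α) → Set (X α)) (a : Set (∀ α, X α)) : Set (∀ α, X α) :=
  {p | ∀ q ∈ a, ∃ α, p α ∈ f α {q α}}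

end Family

section Binary

variable {X₁ X₂ : Type*}

/-- `a₁ × Σ₂ ∪ Σ₁ × a₂`. -/
def cylUnion₂ (a₁ : Set X₁) (a₂ : Set X₂) : Set (X₁ × X₂) := {p | p.1 ∈ a₁ ∨ p.2 ∈ a₂}

/-- Binary box product. -/
def boxProd₂ (L₁ : Set (Set X₁)) (L₂ : Set (Set X₂)) : Set (Set (X₁ × X₂)) :=
  {A | ∃ ω ⊆ {B | ∃ a₁ ∈ L₁, ∃ a₂ ∈ L₂, B = cylUnion₂ a₁ a₂}, ω.Nonempty ∧ A = ⋂₀ ω}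

/-- Binary Fraser product. -/
def fraserProd₂ (L₁ : Set (Set X₁)) (L₂ : Set (Set X₂)) : Set (Set (X₁ × X₂)) :=
  {R | (∀ p₁, {q | (p₁, q) ∈ R} ∈ L₂) ∧ (∀ p₂, {q | (q, p₂) ∈ R} ∈ L₁)}

/-- Binary weak tensor product: axioms P1–P3. -/
def IsWTP₂ (L₁ : Set (Set X₁)) (L₂ : Set (Set X₂)) (M : Set (Set (X₁ × X₂))) : Prop :=
  IsSCS M ∧ (∀ a₁ ∈ L₁, ∀ a₂ ∈ L₂, cylUnion₂ a₁ a₂ ∈ M) ∧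
  (∀ p₁ : X₁, ∀ A₂ : Set X₂, {p₁} ×ˢ A₂ ∈ M → A₂ ∈ L₂) ∧
  (∀ p₂ : X₂, ∀ A₁ : Set X₁, A₁ ×ˢ {p₂} ∈ M → A₁ ∈ L₁)

/-- The simple closure space `MO_Σ`, containing only `∅`, `Σ` and the singletons. -/
def MOspace (X : Type*) : Set (Set X) := {∅, univ} ∪ {A | ∃ p, A = {p}}

end Binary
/-- The weak tensor product `MO_{Σ₁} ∘ MO_{Σ₂}`: the box product together with all
three-element sets whose elements pairwise differ in both coordinates. -/
def circProd (X₁ X₂ : Type*) : Set (Set (X₁ × X₂)) :=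
  boxProd₂ (MOspace X₁) (MOspace X₂) ∪
  {R | ∃ a b c : X₁ × X₂, R = {a, b, c} ∧ a.1 ≠ b.1 ∧ a.1 ≠ c.1 ∧ b.1 ≠ c.1 ∧
      a.2 ≠ b.2 ∧ a.2 ≠ c.2 ∧ b.2 ≠ c.2}

section AuxCirc

open Set

variable {X₁ X₂ : Type*}

/-- Vertical line. -/
def Vl {X₁ X₂ : Type*} (x : X₁) : Set (X₁ × X₂) := {r | r.1 = x}
/-- Horizontal line. -/
def Hl {X₁ X₂ : Type*} (y : X₂) : Set (X₁ × X₂) := {r | r.2 = y}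
/-- Cross. -/
def Cl {X₁ X₂ : Type*} (x : X₁) (y : X₂) : Set (X₁ × X₂) := {r | r.1 = x ∨ r.2 = y}

/-- Explicit classification of elements of `circProd`. -/
def IsClass (A : Set (X₁ × X₂)) : Prop :=
  A = ∅ ∨ A = univ ∨ (∃ z, A = {z}) ∨
  (∃ u v : X₁ × X₂, A = {u, v} ∧ u.1 ≠ v.1 ∧ u.2 ≠ v.2) ∨
  (∃ u v w : X₁ × X₂, A = {u, v, w} ∧ u.1 ≠ v.1 ∧ u.1 ≠ w.1 ∧ v.1 ≠ w.1 ∧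
      u.2 ≠ v.2 ∧ u.2 ≠ w.2 ∧ v.2 ≠ w.2) ∨
  (∃ x, A = Vl x) ∨ (∃ y, A = Hl y) ∨ (∃ x y, A = Cl x y)

lemma mem_MOspace {X : Type*} {a : Set X} :
    a ∈ MOspace X ↔ a = ∅ ∨ a = univ ∨ ∃ p, a = {p} := by
  simp only [MOspace, Set.mem_union, Set.mem_insert_iff, Set.mem_singleton_iff,
    Set.mem_setOf_eq, or_assoc]

lemma isGen_iff {B : Set (X₁ × X₂)} :
    (∃ a₁ ∈ MOspace X₁, ∃ a₂ ∈ MOspace X₂, B = cylUnion₂ a₁ a₂) ↔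
      B = ∅ ∨ B = univ ∨ (∃ x, B = Vl x) ∨ (∃ y, B = Hl y) ∨ ∃ x y, B = Cl x y := by
  constructor
  · rintro ⟨a₁, h₁, a₂, h₂, rfl⟩
    rcases mem_MOspace.1 h₁ with rfl | rfl | ⟨x, rfl⟩ <;>
      rcases mem_MOspace.1 h₂ with rfl | rfl | ⟨y, rfl⟩
    · left; ext r; simp [cylUnion₂]
    · right; left; ext r; simp [cylUnion₂]
    · right; right; right; left; exact ⟨y, by ext r; simp [cylUnion₂, Hl]⟩
    · right; left; ext r; simp [cylUnion₂]
    · right; left; ext r; simp [cylUnion₂]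
    · right; left; ext r; simp [cylUnion₂]
    · right; right; left; exact ⟨x, by ext r; simp [cylUnion₂, Vl]⟩
    · right; left; ext r; simp [cylUnion₂]
    · right; right; right; right; exact ⟨x, y, by ext r; simp [cylUnion₂, Cl]⟩
  · rintro (rfl | rfl | ⟨x, rfl⟩ | ⟨y, rfl⟩ | ⟨x, y, rfl⟩)
    · exact ⟨∅, by simp [mem_MOspace], ∅, by simp [mem_MOspace], by ext r; simp [cylUnion₂]⟩
    · exact ⟨univ, by simp [mem_MOspace], univ, by simp [mem_MOspace], by ext r; simp [cylUnion₂]⟩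
    · exact ⟨{x}, by simp [mem_MOspace], ∅, by simp [mem_MOspace], by ext r; simp [cylUnion₂, Vl]⟩
    · exact ⟨∅, by simp [mem_MOspace], {y}, by simp [mem_MOspace], by ext r; simp [cylUnion₂, Hl]⟩
    · exact ⟨{x}, by simp [mem_MOspace], {y}, by simp [mem_MOspace], by ext r; simp [cylUnion₂, Cl]⟩

lemma gen_mem_box {B : Set (X₁ × X₂)}
    (h : B = ∅ ∨ B = univ ∨ (∃ x, B = Vl x) ∨ (∃ y, B = Hl y) ∨ ∃ x y, B = Cl x y) :
    B ∈ boxProd₂ (MOspace X₁) (MOspace X₂) :=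
  ⟨{B}, by simpa [Set.singleton_subset_iff] using isGen_iff.2 h, ⟨B, rfl⟩,
    (Set.sInter_singleton B).symm⟩

lemma empty_mem_box : (∅ : Set (X₁ × X₂)) ∈ boxProd₂ (MOspace X₁) (MOspace X₂) :=
  gen_mem_box (Or.inl rfl)

lemma univ_mem_box : (univ : Set (X₁ × X₂)) ∈ boxProd₂ (MOspace X₁) (MOspace X₂) :=
  gen_mem_box (Or.inr (Or.inl rfl))

lemma Vl_mem_box (x : X₁) : (Vl x : Set (X₁ × X₂)) ∈ boxProd₂ (MOspace X₁) (MOspace X₂) :=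
  gen_mem_box (Or.inr (Or.inr (Or.inl ⟨x, rfl⟩)))

lemma Hl_mem_box (y : X₂) : (Hl y : Set (X₁ × X₂)) ∈ boxProd₂ (MOspace X₁) (MOspace X₂) :=
  gen_mem_box (Or.inr (Or.inr (Or.inr (Or.inl ⟨y, rfl⟩))))

lemma Cl_mem_box (x : X₁) (y : X₂) :
    (Cl x y : Set (X₁ × X₂)) ∈ boxProd₂ (MOspace X₁) (MOspace X₂) :=
  gen_mem_box (Or.inr (Or.inr (Or.inr (Or.inr ⟨x, y, rfl⟩))))

lemma singleton_mem_box (z : X₁ × X₂) : ({z} : Set (X₁ × X₂)) ∈ boxProd₂ (MOspace X₁) (MOspace X₂) := by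
  refine ⟨{Vl z.1, Hl z.2}, ?_, ⟨Vl z.1, by simp⟩, ?_⟩
  · rintro B (rfl | rfl)
    · exact isGen_iff.2 (Or.inr (Or.inr (Or.inl ⟨z.1, rfl⟩)))
    · exact isGen_iff.2 (Or.inr (Or.inr (Or.inr (Or.inl ⟨z.2, rfl⟩))))
  · rw [Set.sInter_pair]
    ext r
    simp [Vl, Hl, Prod.ext_iff]

lemma pair_mem_box {u v : X₁ × X₂} (h1 : u.1 ≠ v.1) (h2 : u.2 ≠ v.2) :
    ({u, v} : Set (X₁ × X₂)) ∈ boxProd₂ (MOspace X₁) (MOspace X₂) := by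
  refine ⟨{Cl u.1 v.2, Cl v.1 u.2}, ?_, ⟨Cl u.1 v.2, by simp⟩, ?_⟩
  · rintro B (rfl | rfl)
    · exact isGen_iff.2 (Or.inr (Or.inr (Or.inr (Or.inr ⟨u.1, v.2, rfl⟩))))
    · exact isGen_iff.2 (Or.inr (Or.inr (Or.inr (Or.inr ⟨v.1, u.2, rfl⟩))))
  · rw [Set.sInter_pair]
    ext r
    simp only [Set.mem_insert_iff, Set.mem_singleton_iff, Set.mem_inter_iff, Cl,
      Set.mem_setOf_eq, Prod.ext_iff]
    constructor
    · rintro (⟨e1, e2⟩ | ⟨e1, e2⟩)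
      · exact ⟨Or.inl e1, Or.inr e2⟩
      · exact ⟨Or.inr e2, Or.inl e1⟩
    · rintro ⟨ha | ha, hb | hb⟩
      · exact absurd (ha.symm.trans hb) h1
      · exact Or.inl ⟨ha, hb⟩
      · exact Or.inr ⟨hb, ha⟩
      · exact absurd (hb.symm.trans ha) h2

end AuxCirc
section AuxClassify

open Set

variable {X₁ X₂ : Type*}

/-- The five shapes of generators. -/
def Gen5 (B : Set (X₁ × X₂)) : Prop :=
  B = ∅ ∨ B = univ ∨ (∃ x, B = Vl x) ∨ (∃ y, B = Hl y) ∨ ∃ x y, B = Cl x y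

lemma col_step {ω : Set (Set (X₁ × X₂))} (hgen : ∀ B ∈ ω, Gen5 B)
    {z w : X₁ × X₂} (hz : z ∈ ⋂₀ ω) (hw : w ∈ ⋂₀ ω) (e1 : w.1 = z.1) (e2 : w.2 ≠ z.2) :
    Vl z.1 ⊆ ⋂₀ ω := by
  intro r hr
  have hr1 : r.1 = z.1 := hr
  intro B hB
  have hzB := hz B hB
  have hwB := hw B hB
  rcases hgen B hB with rfl | rfl | ⟨x, rfl⟩ | ⟨y, rfl⟩ | ⟨x, y, rfl⟩
  · exact absurd hzB (Set.notMem_empty z)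
  · trivial
  · have hz1 : z.1 = x := hzB
    exact hr1.trans hz1
  · have hz2 : z.2 = y := hzB
    have hw2 : w.2 = y := hwB
    exact absurd (hw2.trans hz2.symm) e2
  · have hzC : z.1 = x ∨ z.2 = y := hzB
    have hwC : w.1 = x ∨ w.2 = y := hwB
    rcases hzC with h | h
    · exact Or.inl (hr1.trans h)
    · rcases hwC with h' | h'
      · exact Or.inl (hr1.trans (e1.symm.trans h'))
      · exact absurd (h'.trans h.symm) e2

lemma row_step {ω : Set (Set (X₁ × X₂))} (hgen : ∀ B ∈ ω, Gen5 B)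
    {z w : X₁ × X₂} (hz : z ∈ ⋂₀ ω) (hw : w ∈ ⋂₀ ω) (e1 : w.2 = z.2) (e2 : w.1 ≠ z.1) :
    Hl z.2 ⊆ ⋂₀ ω := by
  intro r hr
  have hr2 : r.2 = z.2 := hr
  intro B hB
  have hzB := hz B hB
  have hwB := hw B hB
  rcases hgen B hB with rfl | rfl | ⟨x, rfl⟩ | ⟨y, rfl⟩ | ⟨x, y, rfl⟩
  · exact absurd hzB (Set.notMem_empty z)
  · trivial
  · have hz1 : z.1 = x := hzB
    have hw1 : w.1 = x := hwB
    exact absurd (hw1.trans hz1.symm) e2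
  · have hz2 : z.2 = y := hzB
    exact hr2.trans hz2
  · have hzC : z.1 = x ∨ z.2 = y := hzB
    have hwC : w.1 = x ∨ w.2 = y := hwB
    rcases hzC with h | h
    · rcases hwC with h' | h'
      · exact absurd (h'.trans h.symm) e2
      · exact Or.inr (hr2.trans (e1.symm.trans h'))
    · exact Or.inr (hr2.trans h)

lemma classify_col {ω : Set (Set (X₁ × X₂))} (hgen : ∀ B ∈ ω, Gen5 B)
    {z w u : X₁ × X₂} (hz : z ∈ ⋂₀ ω) (hw : w ∈ ⋂₀ ω) (hu : u ∈ ⋂₀ ω)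
    (e1 : w.1 = z.1) (e2 : w.2 ≠ z.2) (hu1 : u.1 ≠ z.1) :
    ⋂₀ ω = Cl z.1 u.2 ∨ ⋂₀ ω = univ := by
  have key : ∀ B ∈ ω, B = univ ∨ B = Cl z.1 u.2 := by
    intro B hB
    have hzB := hz B hB
    have hwB := hw B hB
    have huB := hu B hB
    rcases hgen B hB with rfl | rfl | ⟨x, rfl⟩ | ⟨y, rfl⟩ | ⟨x, y, rfl⟩
    · exact absurd hzB (Set.notMem_empty z)
    · exact Or.inl rfl
    · have hz1 : z.1 = x := hzB
      have hu1' : u.1 = x := huB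
      exact absurd (hu1'.trans hz1.symm) hu1
    · have hz2 : z.2 = y := hzB
      have hw2 : w.2 = y := hwB
      exact absurd (hw2.trans hz2.symm) e2
    · right
      have hzC : z.1 = x ∨ z.2 = y := hzB
      have hwC : w.1 = x ∨ w.2 = y := hwB
      have huC : u.1 = x ∨ u.2 = y := huB
      have hx : x = z.1 := by
        rcases hzC with h | h
        · exact h.symm
        · rcases hwC with h' | h'
          · exact h'.symm.trans e1
          · exact absurd (h'.trans h.symm) e2
      subst hx
      rcases huC with h | h
      · exact absurd h hu1
      · rw [h]
  by_cases hC : Cl z.1 u.2 ∈ ω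
  · left
    refine Subset.antisymm (Set.sInter_subset_of_mem hC) ?_
    intro r hr B hB
    rcases key B hB with rfl | rfl
    · trivial
    · exact hr
  · right
    refine Subset.antisymm (Set.subset_univ _) ?_
    intro r _ B hB
    rcases key B hB with rfl | rfl
    · trivial
    · exact absurd hB hC

lemma classify_row {ω : Set (Set (X₁ × X₂))} (hgen : ∀ B ∈ ω, Gen5 B)
    {z w u : X₁ × X₂} (hz : z ∈ ⋂₀ ω) (hw : w ∈ ⋂₀ ω) (hu : u ∈ ⋂₀ ω)
    (e1 : w.2 = z.2) (e2 : w.1 ≠ z.1) (hu2 : u.2 ≠ z.2) :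
    ⋂₀ ω = Cl u.1 z.2 ∨ ⋂₀ ω = univ := by
  have key : ∀ B ∈ ω, B = univ ∨ B = Cl u.1 z.2 := by
    intro B hB
    have hzB := hz B hB
    have hwB := hw B hB
    have huB := hu B hB
    rcases hgen B hB with rfl | rfl | ⟨x, rfl⟩ | ⟨y, rfl⟩ | ⟨x, y, rfl⟩
    · exact absurd hzB (Set.notMem_empty z)
    · exact Or.inl rfl
    · have hz1 : z.1 = x := hzB
      have hw1 : w.1 = x := hwB
      exact absurd (hw1.trans hz1.symm) e2
    · have hz2 : z.2 = y := hzB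
      have hu2' : u.2 = y := huB
      exact absurd (hu2'.trans hz2.symm) hu2
    · right
      have hzC : z.1 = x ∨ z.2 = y := hzB
      have hwC : w.1 = x ∨ w.2 = y := hwB
      have huC : u.1 = x ∨ u.2 = y := huB
      have hy : y = z.2 := by
        rcases hzC with h | h
        · rcases hwC with h' | h'
          · exact absurd (h'.trans h.symm) e2
          · exact h'.symm.trans e1
        · exact h.symm
      subst hy
      rcases huC with h | h
      · rw [h]
      · exact absurd h hu2
  by_cases hC : Cl u.1 z.2 ∈ ω
  · left
    refine Subset.antisymm (Set.sInter_subset_of_mem hC) ?_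
    intro r hr B hB
    rcases key B hB with rfl | rfl
    · trivial
    · exact hr
  · right
    refine Subset.antisymm (Set.subset_univ _) ?_
    intro r _ B hB
    rcases key B hB with rfl | rfl
    · trivial
    · exact absurd hB hC

lemma box_classify {A : Set (X₁ × X₂)} (hA : A ∈ boxProd₂ (MOspace X₁) (MOspace X₂)) :
    IsClass A := by
  obtain ⟨ω, hsub, -, rfl⟩ := hA
  have hgen : ∀ B ∈ ω, Gen5 B := fun B hB => isGen_iff.1 (hsub hB)
  by_cases h0 : ⋂₀ ω = ∅
  · exact Or.inl h0
  obtain ⟨z, hz⟩ := Set.nonempty_iff_ne_empty.2 h0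
  by_cases h1 : ⋂₀ ω ⊆ {z}
  · exact Or.inr (Or.inr (Or.inl ⟨z, Subset.antisymm h1 (Set.singleton_subset_iff.2 hz)⟩))
  obtain ⟨w, hw, hwz⟩ : ∃ w ∈ ⋂₀ ω, w ≠ z := by
    obtain ⟨w, hw, hmem⟩ := Set.not_subset.1 h1
    exact ⟨w, hw, by simpa using hmem⟩
  by_cases e1 : w.1 = z.1
  · have e2 : w.2 ≠ z.2 := fun h => hwz (Prod.ext e1 h)
    by_cases h2 : ⋂₀ ω ⊆ Vl z.1
    · refine Or.inr (Or.inr (Or.inr (Or.inr (Or.inr (Or.inl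
        ⟨z.1, Subset.antisymm h2 (col_step hgen hz hw e1 e2)⟩)))))
    · obtain ⟨u, hu, hu1⟩ : ∃ u ∈ ⋂₀ ω, u.1 ≠ z.1 := Set.not_subset.1 h2
      rcases classify_col hgen hz hw hu e1 e2 hu1 with h | h
      · exact Or.inr (Or.inr (Or.inr (Or.inr (Or.inr (Or.inr (Or.inr ⟨z.1, u.2, h⟩))))))
      · exact Or.inr (Or.inl h)
  · by_cases e2 : w.2 = z.2
    · by_cases h2 : ⋂₀ ω ⊆ Hl z.2
      · refine Or.inr (Or.inr (Or.inr (Or.inr (Or.inr (Or.inr (Or.inl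
          ⟨z.2, Subset.antisymm h2 (row_step hgen hz hw e2 e1)⟩))))))
      · obtain ⟨u, hu, hu2⟩ : ∃ u ∈ ⋂₀ ω, u.2 ≠ z.2 := Set.not_subset.1 h2
        rcases classify_row hgen hz hw hu e2 e1 hu2 with h | h
        · exact Or.inr (Or.inr (Or.inr (Or.inr (Or.inr (Or.inr (Or.inr ⟨u.1, z.2, h⟩))))))
        · exact Or.inr (Or.inl h)
    · -- z, w differ in both coordinates
      by_cases h2 : ⋂₀ ω ⊆ {z, w}
      · refine Or.inr (Or.inr (Or.inr (Or.inl ⟨z, w, ?_, fun h => e1 h.symm, fun h => e2 h.symm⟩)))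
        exact Subset.antisymm h2 (Set.insert_subset hz (Set.singleton_subset_iff.2 hw))
      · obtain ⟨u, hu, humem⟩ := Set.not_subset.1 h2
        have huz : u ≠ z := fun h => humem (by simp [h])
        have huw : u ≠ w := fun h => humem (by simp [h])
        by_cases c1 : u.1 = z.1
        · have c1' : u.2 ≠ z.2 := fun h => huz (Prod.ext c1 h)
          rcases classify_col hgen hz hu hw c1 c1' e1 with h | h
          · exact Or.inr (Or.inr (Or.inr (Or.inr (Or.inr (Or.inr (Or.inr ⟨z.1, w.2, h⟩))))))
          · exact Or.inr (Or.inl h)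
        · by_cases c2 : u.1 = w.1
          · have c2' : u.2 ≠ w.2 := fun h => huw (Prod.ext c2 h)
            have hz1 : z.1 ≠ w.1 := fun h => e1 h.symm
            rcases classify_col hgen hw hu hz c2 c2' hz1 with h | h
            · exact Or.inr (Or.inr (Or.inr (Or.inr (Or.inr (Or.inr (Or.inr ⟨w.1, z.2, h⟩))))))
            · exact Or.inr (Or.inl h)
          · by_cases c3 : u.2 = z.2
            · rcases classify_row hgen hz hu hw c3 c1 e2 with h | h
              · exact Or.inr (Or.inr (Or.inr (Or.inr (Or.inr (Or.inr (Or.inr ⟨w.1, z.2, h⟩))))))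
              · exact Or.inr (Or.inl h)
            · by_cases c4 : u.2 = w.2
              · have hz2 : z.2 ≠ w.2 := fun h => e2 h.symm
                rcases classify_row hgen hw hu hz c4 c2 hz2 with h | h
                · exact Or.inr (Or.inr (Or.inr (Or.inr (Or.inr (Or.inr (Or.inr ⟨z.1, w.2, h⟩))))))
                · exact Or.inr (Or.inl h)
              · -- z, w, u pairwise diagonal: everything is univ
                right; left
                have key : ∀ B ∈ ω, B = univ := by
                  intro B hB
                  have hzB := hz B hB
                  have hwB := hw B hB
                  have huB := hu B hB
                  rcases hgen B hB with rfl | rfl | ⟨x, rfl⟩ | ⟨y, rfl⟩ | ⟨x, y, rfl⟩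
                  · exact absurd hzB (Set.notMem_empty z)
                  · rfl
                  · have hz1 : z.1 = x := hzB
                    have hw1 : w.1 = x := hwB
                    exact absurd (hw1.trans hz1.symm) e1
                  · have hz2 : z.2 = y := hzB
                    have hw2 : w.2 = y := hwB
                    exact absurd (hw2.trans hz2.symm) e2
                  · have hzC : z.1 = x ∨ z.2 = y := hzB
                    have hwC : w.1 = x ∨ w.2 = y := hwB
                    have huC : u.1 = x ∨ u.2 = y := huB
                    rcases hzC with h1 | h1 <;> rcases hwC with h2 | h2 <;> rcases huC with h3 | h3
                    · exact absurd (h2.trans h1.symm) e1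
                    · exact absurd (h2.trans h1.symm) e1
                    · exact absurd (h3.trans h1.symm) c1
                    · exact absurd (h3.trans h2.symm) c4
                    · exact absurd (h3.trans h2.symm) c2
                    · exact absurd (h3.trans h1.symm) c3
                    · exact absurd (h2.trans h1.symm) e2
                    · exact absurd (h2.trans h1.symm) e2
                refine Subset.antisymm (Set.subset_univ _) ?_
                intro r _ B hB
                rw [key B hB]
                trivial

lemma circ_classify {A : Set (X₁ × X₂)} (hA : A ∈ circProd X₁ X₂) : IsClass A := by
  rcases hA with hA | ⟨u, v, w, rfl, h1, h2, h3, h4, h5, h6⟩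
  · exact box_classify hA
  · exact Or.inr (Or.inr (Or.inr (Or.inr (Or.inl ⟨u, v, w, rfl, h1, h2, h3, h4, h5, h6⟩))))

end AuxClassify
section AuxMem

open Set

variable {X₁ X₂ : Type*}

lemma empty_mem_circ : (∅ : Set (X₁ × X₂)) ∈ circProd X₁ X₂ := Or.inl empty_mem_box
lemma univ_mem_circ : (univ : Set (X₁ × X₂)) ∈ circProd X₁ X₂ := Or.inl univ_mem_box
lemma sing_mem_circ (z : X₁ × X₂) : ({z} : Set (X₁ × X₂)) ∈ circProd X₁ X₂ :=
  Or.inl (singleton_mem_box z)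
lemma pair_mem_circ {u v : X₁ × X₂} (h1 : u.1 ≠ v.1) (h2 : u.2 ≠ v.2) :
    ({u, v} : Set (X₁ × X₂)) ∈ circProd X₁ X₂ := Or.inl (pair_mem_box h1 h2)
lemma triple_mem_circ {u v w : X₁ × X₂} (h1 : u.1 ≠ v.1) (h2 : u.1 ≠ w.1) (h3 : v.1 ≠ w.1)
    (h4 : u.2 ≠ v.2) (h5 : u.2 ≠ w.2) (h6 : v.2 ≠ w.2) :
    ({u, v, w} : Set (X₁ × X₂)) ∈ circProd X₁ X₂ :=
  Or.inr ⟨u, v, w, rfl, h1, h2, h3, h4, h5, h6⟩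
lemma Vl_mem_circ (x : X₁) : (Vl x : Set (X₁ × X₂)) ∈ circProd X₁ X₂ := Or.inl (Vl_mem_box x)
lemma Hl_mem_circ (y : X₂) : (Hl y : Set (X₁ × X₂)) ∈ circProd X₁ X₂ := Or.inl (Hl_mem_box y)
lemma Cl_mem_circ (x : X₁) (y : X₂) : (Cl x y : Set (X₁ × X₂)) ∈ circProd X₁ X₂ :=
  Or.inl (Cl_mem_box x y)

/-- Two distinct points of a diagonal triple differ in both coordinates. -/
lemma triple_pts {u v w : X₁ × X₂} (h1 : u.1 ≠ v.1) (h2 : u.1 ≠ w.1) (h3 : v.1 ≠ w.1)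
    (h4 : u.2 ≠ v.2) (h5 : u.2 ≠ w.2) (h6 : v.2 ≠ w.2) {a b : X₁ × X₂}
    (ha : a ∈ ({u, v, w} : Set (X₁ × X₂))) (hb : b ∈ ({u, v, w} : Set (X₁ × X₂)))
    (hab : a ≠ b) : a.1 ≠ b.1 ∧ a.2 ≠ b.2 := by
  simp only [Set.mem_insert_iff, Set.mem_singleton_iff] at ha hb
  rcases ha with rfl | rfl | rfl <;> rcases hb with rfl | rfl | rfl <;>
    first
      | exact absurd rfl hab
      | exact ⟨h1, h4⟩
      | exact ⟨h2, h5⟩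
      | exact ⟨h3, h6⟩
      | exact ⟨h1.symm, h4.symm⟩
      | exact ⟨h2.symm, h5.symm⟩
      | exact ⟨h3.symm, h6.symm⟩

/-- Two distinct points of a diagonal pair differ in both coordinates. -/
lemma pair_pts {u v : X₁ × X₂} (h1 : u.1 ≠ v.1) (h2 : u.2 ≠ v.2) {a b : X₁ × X₂}
    (ha : a ∈ ({u, v} : Set (X₁ × X₂))) (hb : b ∈ ({u, v} : Set (X₁ × X₂)))
    (hab : a ≠ b) : a.1 ≠ b.1 ∧ a.2 ≠ b.2 := by
  simp only [Set.mem_insert_iff, Set.mem_singleton_iff] at ha hb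
  rcases ha with rfl | rfl <;> rcases hb with rfl | rfl
  · exact absurd rfl hab
  · exact ⟨h1, h2⟩
  · exact ⟨h1.symm, h2.symm⟩
  · exact absurd rfl hab

/-- Three pairwise-distinct points cannot lie in a pair. -/
lemma three_in_pair {σ : Type*} {u v q r s : σ} (hq : q ∈ ({u, v} : Set σ))
    (hr : r ∈ ({u, v} : Set σ)) (hs : s ∈ ({u, v} : Set σ))
    (hqr : q ≠ r) (hqs : q ≠ s) (hrs : r ≠ s) : False := by
  simp only [Set.mem_insert_iff, Set.mem_singleton_iff] at hq hr hs
  rcases hq with rfl | rfl <;> rcases hr with rfl | rfl <;> rcases hs with rfl | rfl <;>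
    simp_all

/-- Four pairwise-distinct points cannot lie in a triple. -/
lemma four_in_triple {σ : Type*} {u v w q r s z : σ} (hq : q ∈ ({u, v, w} : Set σ))
    (hr : r ∈ ({u, v, w} : Set σ)) (hs : s ∈ ({u, v, w} : Set σ))
    (hz : z ∈ ({u, v, w} : Set σ)) (hqr : q ≠ r) (hqs : q ≠ s) (hrs : r ≠ s)
    (hzq : z ≠ q) (hzr : z ≠ r) (hzs : z ≠ s) : False := by
  simp only [Set.mem_insert_iff, Set.mem_singleton_iff] at hq hr hs hz
  rcases hq with rfl | rfl | rfl <;> rcases hr with rfl | rfl | rfl <;>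
    rcases hs with rfl | rfl | rfl <;> simp_all

/-- Three pairwise-diagonal points cannot lie on a cross. -/
lemma three_in_cross {x : X₁} {y : X₂} {q r s : X₁ × X₂}
    (hq : q ∈ (Cl x y : Set (X₁ × X₂))) (hr : r ∈ (Cl x y : Set (X₁ × X₂)))
    (hs : s ∈ (Cl x y : Set (X₁ × X₂)))
    (h1 : q.1 ≠ r.1) (h2 : q.1 ≠ s.1) (h3 : r.1 ≠ s.1)
    (h4 : q.2 ≠ r.2) (h5 : q.2 ≠ s.2) (h6 : r.2 ≠ s.2) : False := by
  have hq' : q.1 = x ∨ q.2 = y := hq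
  have hr' : r.1 = x ∨ r.2 = y := hr
  have hs' : s.1 = x ∨ s.2 = y := hs
  rcases hq' with h | h <;> rcases hr' with h' | h' <;> rcases hs' with h'' | h''
  · exact h1 (h.trans h'.symm)
  · exact h1 (h.trans h'.symm)
  · exact h2 (h.trans h''.symm)
  · exact h6 (h'.trans h''.symm)
  · exact h3 (h'.trans h''.symm)
  · exact h5 (h.trans h''.symm)
  · exact h4 (h.trans h'.symm)
  · exact h4 (h.trans h'.symm)

end AuxMem

section AuxSJoin

open Set

variable {σ : Type*}

lemma subset_sJoin {L : Set (Set σ)} {S : Set σ} : S ⊆ sJoin L S := by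
  intro x hx b hb
  exact hb.2 hx

lemma sJoin_subset {L : Set (Set σ)} {S b : Set σ} (hb : b ∈ L) (hSb : S ⊆ b) :
    sJoin L S ⊆ b :=
  Set.sInter_subset_of_mem ⟨hb, hSb⟩

lemma sJoin_eq {L : Set (Set σ)} {S T : Set σ} (hT : T ∈ L) (hST : S ⊆ T)
    (hmin : ∀ b ∈ L, S ⊆ b → T ⊆ b) : sJoin L S = T := by
  refine Subset.antisymm (sJoin_subset hT hST) ?_
  intro x hx b hb
  exact hmin b hb.1 hb.2 hx

lemma coversIn_sJoin {L : Set (Set σ)} {a : Set σ} {p : σ} (hp : p ∉ a)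
    (hstep : ∀ c ∈ L, a ⊆ c → c ⊆ sJoin L (insert p a) → p ∈ c ∨ c ⊆ a) :
    CoversIn L a (sJoin L (insert p a)) := by
  have hpj : p ∈ sJoin L (insert p a) := subset_sJoin (Set.mem_insert p a)
  constructor
  · rw [Set.ssubset_def]
    exact ⟨(Set.subset_insert p a).trans subset_sJoin, fun hsub => hp (hsub hpj)⟩
  · intro c hc hac hcj
    rcases hstep c hc hac hcj with hpc | hca
    · exact Or.inr (Subset.antisymm hcj (sJoin_subset hc (Set.insert_subset hpc hac)))
    · exact Or.inl (Subset.antisymm hca hac)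

lemma step_insert {c s : Set σ} {p : σ} (h : c ⊆ insert p s) : p ∈ c ∨ c ⊆ s := by
  by_cases hp : p ∈ c
  · exact Or.inl hp
  · right
    intro r hr
    rcases h hr with rfl | hs
    · exact absurd hr hp
    · exact hs

end AuxSJoin

section AuxSCS

open Set

variable {X₁ X₂ : Type*}

lemma box_sInter {ω : Set (Set (X₁ × X₂))}
    (h : ω ⊆ boxProd₂ (MOspace X₁) (MOspace X₂)) (hne : ω.Nonempty) :
    ⋂₀ ω ∈ boxProd₂ (MOspace X₁) (MOspace X₂) := by
  refine ⟨{B | (∃ a₁ ∈ MOspace X₁, ∃ a₂ ∈ MOspace X₂, B = cylUnion₂ a₁ a₂) ∧ ∃ A ∈ ω, A ⊆ B},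
    fun B hB => hB.1, ?_, ?_⟩
  · obtain ⟨A, hA⟩ := hne
    obtain ⟨ωA, hsubA, ⟨B₀, hB₀⟩, hAeq⟩ := h hA
    exact ⟨B₀, hsubA hB₀, A, hA, hAeq ▸ Set.sInter_subset_of_mem hB₀⟩
  · refine Subset.antisymm ?_ ?_
    · intro r hr B hB
      obtain ⟨-, A, hA, hAB⟩ := hB
      exact hAB (hr A hA)
    · intro r hr A hA
      obtain ⟨ωA, hsubA, -, rfl⟩ := h hA
      intro B hB
      exact hr B ⟨hsubA hB, ⋂₀ ωA, hA, Set.sInter_subset_of_mem hB⟩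

lemma circ_sInter {ω : Set (Set (X₁ × X₂))} (h : ω ⊆ circProd X₁ X₂) :
    ⋂₀ ω ∈ circProd X₁ X₂ := by
  by_cases htri : ∃ T ∈ ω, ∃ u v w : X₁ × X₂, T = {u, v, w} ∧ u.1 ≠ v.1 ∧ u.1 ≠ w.1 ∧
      v.1 ≠ w.1 ∧ u.2 ≠ v.2 ∧ u.2 ≠ w.2 ∧ v.2 ≠ w.2
  · obtain ⟨T, hT, u, v, w, rfl, h1, h2, h3, h4, h5, h6⟩ := htri
    have hsub : ⋂₀ ω ⊆ {u, v, w} := Set.sInter_subset_of_mem hT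
    have huv : u ≠ v := fun h => h1 (h ▸ rfl)
    have huw : u ≠ w := fun h => h2 (h ▸ rfl)
    have hvw : v ≠ w := fun h => h3 (h ▸ rfl)
    by_cases hu : u ∈ ⋂₀ ω <;> by_cases hv : v ∈ ⋂₀ ω <;> by_cases hw : w ∈ ⋂₀ ω
    · have : ⋂₀ ω = {u, v, w} := Subset.antisymm hsub
        (Set.insert_subset hu (Set.insert_subset hv (Set.singleton_subset_iff.2 hw)))
      rw [this]
      exact triple_mem_circ h1 h2 h3 h4 h5 h6
    · have : ⋂₀ ω = {u, v} := by
        refine Subset.antisymm ?_ (Set.insert_subset hu (Set.singleton_subset_iff.2 hv))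
        intro r hr
        rcases hsub hr with rfl | rfl | rfl
        · exact Set.mem_insert r _
        · exact Set.mem_insert_of_mem _ rfl
        · exact absurd hr hw
      rw [this]
      exact pair_mem_circ h1 h4
    · have : ⋂₀ ω = {u, w} := by
        refine Subset.antisymm ?_ (Set.insert_subset hu (Set.singleton_subset_iff.2 hw))
        intro r hr
        rcases hsub hr with rfl | rfl | rfl
        · exact Set.mem_insert r _
        · exact absurd hr hv
        · exact Set.mem_insert_of_mem _ rfl
      rw [this]
      exact pair_mem_circ h2 h5
    · have : ⋂₀ ω = {u} := by
        refine Subset.antisymm ?_ (Set.singleton_subset_iff.2 hu)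
        intro r hr
        rcases hsub hr with rfl | rfl | rfl
        · rfl
        · exact absurd hr hv
        · exact absurd hr hw
      rw [this]
      exact sing_mem_circ u
    · have : ⋂₀ ω = {v, w} := by
        refine Subset.antisymm ?_ (Set.insert_subset hv (Set.singleton_subset_iff.2 hw))
        intro r hr
        rcases hsub hr with rfl | rfl | rfl
        · exact absurd hr hu
        · exact Set.mem_insert r _
        · exact Set.mem_insert_of_mem _ rfl
      rw [this]
      exact pair_mem_circ h3 h6
    · have : ⋂₀ ω = {v} := by
        refine Subset.antisymm ?_ (Set.singleton_subset_iff.2 hv)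
        intro r hr
        rcases hsub hr with rfl | rfl | rfl
        · exact absurd hr hu
        · rfl
        · exact absurd hr hw
      rw [this]
      exact sing_mem_circ v
    · have : ⋂₀ ω = {w} := by
        refine Subset.antisymm ?_ (Set.singleton_subset_iff.2 hw)
        intro r hr
        rcases hsub hr with rfl | rfl | rfl
        · exact absurd hr hu
        · exact absurd hr hv
        · rfl
      rw [this]
      exact sing_mem_circ w
    · have : ⋂₀ ω = ∅ := by
        refine Set.eq_empty_iff_forall_notMem.2 fun r hr => ?_
        rcases hsub hr with rfl | rfl | rfl
        · exact hu hr
        · exact hv hr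
        · exact hw hr
      rw [this]
      exact empty_mem_circ
  · have hbox : ω ⊆ boxProd₂ (MOspace X₁) (MOspace X₂) := by
      intro A hA
      rcases h hA with hb | ht
      · exact hb
      · exact absurd ⟨A, hA, ht⟩ htri
    rcases Set.eq_empty_or_nonempty ω with rfl | hne
    · rw [Set.sInter_empty]
      exact univ_mem_circ
    · exact Or.inl (box_sInter hbox hne)

lemma circ_SCS : IsSCS (circProd X₁ X₂) :=
  ⟨fun _ hω => circ_sInter hω, empty_mem_circ, sing_mem_circ⟩

end AuxSCS

section AuxWTP

open Set

variable {X₁ X₂ : Type*}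

lemma circ_P1 : ∀ a₁ ∈ MOspace X₁, ∀ a₂ ∈ MOspace X₂, cylUnion₂ a₁ a₂ ∈ circProd X₁ X₂ := by
  intro a₁ h₁ a₂ h₂
  exact Or.inl ⟨{cylUnion₂ a₁ a₂}, by simpa [Set.singleton_subset_iff] using
    (⟨a₁, h₁, a₂, h₂, rfl⟩ : ∃ b₁ ∈ MOspace X₁, ∃ b₂ ∈ MOspace X₂, cylUnion₂ a₁ a₂ = cylUnion₂ b₁ b₂),
    ⟨cylUnion₂ a₁ a₂, rfl⟩, (Set.sInter_singleton _).symm⟩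

lemma circ_P2 : ∀ p₁ : X₁, ∀ A₂ : Set X₂, {p₁} ×ˢ A₂ ∈ circProd X₁ X₂ → A₂ ∈ MOspace X₂ := by
  intro p₁ A₂ hmem
  have hiff : ∀ r : X₁ × X₂, r ∈ ({p₁} ×ˢ A₂ : Set (X₁ × X₂)) ↔ r.1 = p₁ ∧ r.2 ∈ A₂ := by
    intro r; simp only [Set.mem_prod, Set.mem_singleton_iff]
  rw [mem_MOspace]
  rcases circ_classify hmem with h | h | ⟨z, h⟩ | ⟨u, v, h, h1, h2⟩ |
      ⟨u, v, w, h, h1, h2, h3, h4, h5, h6⟩ | ⟨x, h⟩ | ⟨y, h⟩ | ⟨x, y, h⟩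
  · left
    refine Set.eq_empty_iff_forall_notMem.2 fun y hy => ?_
    have : (p₁, y) ∈ ({p₁} ×ˢ A₂ : Set (X₁ × X₂)) := (hiff _).2 ⟨rfl, hy⟩
    rw [h] at this
    exact this
  · right; left
    refine Set.eq_univ_iff_forall.2 fun y => ?_
    have : (p₁, y) ∈ ({p₁} ×ˢ A₂ : Set (X₁ × X₂)) := by rw [h]; trivial
    exact ((hiff _).1 this).2
  · right; right
    refine ⟨z.2, Subset.antisymm ?_ ?_⟩
    · intro y hy
      have : (p₁, y) ∈ ({p₁} ×ˢ A₂ : Set (X₁ × X₂)) := (hiff _).2 ⟨rfl, hy⟩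
      rw [h] at this
      have := Set.mem_singleton_iff.1 this
      exact Set.mem_singleton_iff.2 (congrArg Prod.snd this)
    · intro y hy
      have hz : z ∈ ({p₁} ×ˢ A₂ : Set (X₁ × X₂)) := by rw [h]; rfl
      have := ((hiff _).1 hz).2
      rwa [Set.mem_singleton_iff.1 hy]
  · exfalso
    have hu : u ∈ ({p₁} ×ˢ A₂ : Set (X₁ × X₂)) := by rw [h]; exact Set.mem_insert u _
    have hv : v ∈ ({p₁} ×ˢ A₂ : Set (X₁ × X₂)) := by rw [h]; exact Set.mem_insert_of_mem _ rfl
    exact h1 (((hiff _).1 hu).1.trans (((hiff _).1 hv).1).symm)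
  · exfalso
    have hu : u ∈ ({p₁} ×ˢ A₂ : Set (X₁ × X₂)) := by rw [h]; exact Set.mem_insert u _
    have hv : v ∈ ({p₁} ×ˢ A₂ : Set (X₁ × X₂)) := by
      rw [h]; exact Set.mem_insert_of_mem _ (Set.mem_insert v _)
    exact h1 (((hiff _).1 hu).1.trans (((hiff _).1 hv).1).symm)
  · right; left
    refine Set.eq_univ_iff_forall.2 fun y => ?_
    have : (x, y) ∈ ({p₁} ×ˢ A₂ : Set (X₁ × X₂)) := by
      rw [h]; exact (rfl : ((x, y) : X₁ × X₂).1 = x)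
    exact ((hiff _).1 this).2
  · right; right
    refine ⟨y, Subset.antisymm ?_ ?_⟩
    · intro y' hy'
      have : (p₁, y') ∈ ({p₁} ×ˢ A₂ : Set (X₁ × X₂)) := (hiff _).2 ⟨rfl, hy'⟩
      rw [h] at this
      exact this
    · intro y' hy'
      have : (p₁, y) ∈ ({p₁} ×ˢ A₂ : Set (X₁ × X₂)) := by
        rw [h]; exact (rfl : ((p₁, y) : X₁ × X₂).2 = y)
      have := ((hiff _).1 this).2
      rwa [Set.mem_singleton_iff.1 hy']
  · right; left
    refine Set.eq_univ_iff_forall.2 fun y' => ?_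
    have : (x, y') ∈ ({p₁} ×ˢ A₂ : Set (X₁ × X₂)) := by
      rw [h]; exact Or.inl rfl
    exact ((hiff _).1 this).2

lemma circ_P3 : ∀ p₂ : X₂, ∀ A₁ : Set X₁, A₁ ×ˢ {p₂} ∈ circProd X₁ X₂ → A₁ ∈ MOspace X₁ := by
  intro p₂ A₁ hmem
  have hiff : ∀ r : X₁ × X₂, r ∈ (A₁ ×ˢ {p₂} : Set (X₁ × X₂)) ↔ r.1 ∈ A₁ ∧ r.2 = p₂ := by
    intro r; simp only [Set.mem_prod, Set.mem_singleton_iff]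
  rw [mem_MOspace]
  rcases circ_classify hmem with h | h | ⟨z, h⟩ | ⟨u, v, h, h1, h2⟩ |
      ⟨u, v, w, h, h1, h2, h3, h4, h5, h6⟩ | ⟨x, h⟩ | ⟨y, h⟩ | ⟨x, y, h⟩
  · left
    refine Set.eq_empty_iff_forall_notMem.2 fun q hq => ?_
    have : (q, p₂) ∈ (A₁ ×ˢ {p₂} : Set (X₁ × X₂)) := (hiff _).2 ⟨hq, rfl⟩
    rw [h] at this
    exact this
  · right; left
    refine Set.eq_univ_iff_forall.2 fun q => ?_
    have : (q, p₂) ∈ (A₁ ×ˢ {p₂} : Set (X₁ × X₂)) := by rw [h]; trivial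
    exact ((hiff _).1 this).1
  · right; right
    refine ⟨z.1, Subset.antisymm ?_ ?_⟩
    · intro q hq
      have : (q, p₂) ∈ (A₁ ×ˢ {p₂} : Set (X₁ × X₂)) := (hiff _).2 ⟨hq, rfl⟩
      rw [h] at this
      exact Set.mem_singleton_iff.2 (congrArg Prod.fst (Set.mem_singleton_iff.1 this))
    · intro q hq
      have hz : z ∈ (A₁ ×ˢ {p₂} : Set (X₁ × X₂)) := by rw [h]; rfl
      have := ((hiff _).1 hz).1
      rwa [Set.mem_singleton_iff.1 hq]
  · exfalso
    have hu : u ∈ (A₁ ×ˢ {p₂} : Set (X₁ × X₂)) := by rw [h]; exact Set.mem_insert u _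
    have hv : v ∈ (A₁ ×ˢ {p₂} : Set (X₁ × X₂)) := by rw [h]; exact Set.mem_insert_of_mem _ rfl
    exact h2 (((hiff _).1 hu).2.trans (((hiff _).1 hv).2).symm)
  · exfalso
    have hu : u ∈ (A₁ ×ˢ {p₂} : Set (X₁ × X₂)) := by rw [h]; exact Set.mem_insert u _
    have hv : v ∈ (A₁ ×ˢ {p₂} : Set (X₁ × X₂)) := by
      rw [h]; exact Set.mem_insert_of_mem _ (Set.mem_insert v _)
    exact h4 (((hiff _).1 hu).2.trans (((hiff _).1 hv).2).symm)
  · right; right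
    refine ⟨x, Subset.antisymm ?_ ?_⟩
    · intro q hq
      have : (q, p₂) ∈ (A₁ ×ˢ {p₂} : Set (X₁ × X₂)) := (hiff _).2 ⟨hq, rfl⟩
      rw [h] at this
      exact this
    · intro q hq
      have : (x, p₂) ∈ (A₁ ×ˢ {p₂} : Set (X₁ × X₂)) := by
        rw [h]; exact (rfl : ((x, p₂) : X₁ × X₂).1 = x)
      have := ((hiff _).1 this).1
      rwa [Set.mem_singleton_iff.1 hq]
  · right; left
    refine Set.eq_univ_iff_forall.2 fun q => ?_
    have : (q, y) ∈ (A₁ ×ˢ {p₂} : Set (X₁ × X₂)) := by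
      rw [h]; exact (rfl : ((q, y) : X₁ × X₂).2 = y)
    exact ((hiff _).1 this).1
  · right; left
    refine Set.eq_univ_iff_forall.2 fun q => ?_
    have : (q, y) ∈ (A₁ ×ˢ {p₂} : Set (X₁ × X₂)) := by
      rw [h]; exact Or.inr rfl
    exact ((hiff _).1 this).1

end AuxWTP
section AuxCover

open Set

variable {X₁ X₂ : Type*}

/-! ### minimality lemmas: computing joins -/

lemma min_col {b : Set (X₁ × X₂)} (hb : b ∈ circProd X₁ X₂) {p q : X₁ × X₂}
    (hpq : p ≠ q) (e : p.1 = q.1) (hpb : p ∈ b) (hqb : q ∈ b) : Vl q.1 ⊆ b := by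
  have e2 : p.2 ≠ q.2 := fun h => hpq (Prod.ext e h)
  rcases circ_classify hb with rfl | rfl | ⟨z, rfl⟩ | ⟨u, v, rfl, g1, g2⟩ |
      ⟨u, v, w, rfl, g1, g2, g3, g4, g5, g6⟩ | ⟨x, rfl⟩ | ⟨y, rfl⟩ | ⟨x, y, rfl⟩
  · exact absurd hpb (Set.notMem_empty p)
  · exact Set.subset_univ _
  · exact absurd ((show p = z from hpb).trans (show q = z from hqb).symm) hpq
  · exact absurd e (pair_pts g1 g2 hpb hqb hpq).1
  · exact absurd e (triple_pts g1 g2 g3 g4 g5 g6 hpb hqb hpq).1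
  · intro r hr
    exact (hr : r.1 = q.1).trans (show q.1 = x from hqb)
  · exact absurd ((show p.2 = y from hpb).trans (show q.2 = y from hqb).symm) e2
  · intro r hr
    have hrq : r.1 = q.1 := hr
    rcases (show q.1 = x ∨ q.2 = y from hqb) with h | h
    · exact Or.inl (hrq.trans h)
    · rcases (show p.1 = x ∨ p.2 = y from hpb) with h' | h'
      · exact Or.inl (hrq.trans (e.symm.trans h'))
      · exact absurd (h'.trans h.symm) e2

lemma min_row {b : Set (X₁ × X₂)} (hb : b ∈ circProd X₁ X₂) {p q : X₁ × X₂}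
    (hpq : p ≠ q) (e : p.2 = q.2) (hpb : p ∈ b) (hqb : q ∈ b) : Hl q.2 ⊆ b := by
  have e1 : p.1 ≠ q.1 := fun h => hpq (Prod.ext h e)
  rcases circ_classify hb with rfl | rfl | ⟨z, rfl⟩ | ⟨u, v, rfl, g1, g2⟩ |
      ⟨u, v, w, rfl, g1, g2, g3, g4, g5, g6⟩ | ⟨x, rfl⟩ | ⟨y, rfl⟩ | ⟨x, y, rfl⟩
  · exact absurd hpb (Set.notMem_empty p)
  · exact Set.subset_univ _
  · exact absurd ((show p = z from hpb).trans (show q = z from hqb).symm) hpq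
  · exact absurd e (pair_pts g1 g2 hpb hqb hpq).2
  · exact absurd e (triple_pts g1 g2 g3 g4 g5 g6 hpb hqb hpq).2
  · exact absurd ((show p.1 = x from hpb).trans (show q.1 = x from hqb).symm) e1
  · intro s hs
    exact (hs : s.2 = q.2).trans (show q.2 = y from hqb)
  · intro s hs
    have hs2 : s.2 = q.2 := hs
    rcases (show q.1 = x ∨ q.2 = y from hqb) with h | h
    · rcases (show p.1 = x ∨ p.2 = y from hpb) with h' | h'
      · exact absurd (h'.trans h.symm) e1
      · exact Or.inr (hs2.trans (e.symm.trans h'))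
    · exact Or.inr (hs2.trans h)

lemma min_pair {b : Set (X₁ × X₂)} (hb : b ∈ circProd X₁ X₂) {q r p : X₁ × X₂}
    (h1 : q.1 ≠ r.1) (h2 : q.2 ≠ r.2) (hpq : p ≠ q) (hpr : p ≠ r)
    (hshare : p.1 = q.1 ∨ p.2 = r.2) (hpb : p ∈ b) (hqb : q ∈ b) (hrb : r ∈ b) :
    Cl q.1 r.2 ⊆ b := by
  have hqr : q ≠ r := fun h => h1 (h ▸ rfl)
  rcases circ_classify hb with rfl | rfl | ⟨z, rfl⟩ | ⟨u, v, rfl, g1, g2⟩ |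
      ⟨u, v, w, rfl, g1, g2, g3, g4, g5, g6⟩ | ⟨x, rfl⟩ | ⟨y, rfl⟩ | ⟨x, y, rfl⟩
  · exact absurd hqb (Set.notMem_empty q)
  · exact Set.subset_univ _
  · exact absurd ((show q = z from hqb).trans (show r = z from hrb).symm) hqr
  · exact (three_in_pair hpb hqb hrb hpq hpr hqr).elim
  · rcases hshare with hs | hs
    · exact absurd hs (triple_pts g1 g2 g3 g4 g5 g6 hpb hqb hpq).1
    · exact absurd hs (triple_pts g1 g2 g3 g4 g5 g6 hpb hrb hpr).2
  · exact absurd ((show q.1 = x from hqb).trans (show r.1 = x from hrb).symm) h1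
  · exact absurd ((show q.2 = y from hqb).trans (show r.2 = y from hrb).symm) h2
  · have hqC : q.1 = x ∨ q.2 = y := hqb
    have hrC : r.1 = x ∨ r.2 = y := hrb
    have hpC : p.1 = x ∨ p.2 = y := hpb
    rcases hqC with hq' | hq'
    · rcases hrC with hr' | hr'
      · exact absurd (hq'.trans hr'.symm) h1
      · intro s hs
        rcases (hs : s.1 = q.1 ∨ s.2 = r.2) with h | h
        · exact Or.inl (h.trans hq')
        · exact Or.inr (h.trans hr')
    · rcases hrC with hr' | hr'
      · exfalso
        rcases hpC with hp' | hp'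
        · rcases hshare with hs | hs
          · exact h1 (hs.symm.trans (hp'.trans hr'.symm))
          · exact hpr (Prod.ext (hp'.trans hr'.symm) hs)
        · rcases hshare with hs | hs
          · exact hpq (Prod.ext hs (hp'.trans hq'.symm))
          · exact h2 ((hp'.trans hq'.symm).symm.trans hs)
      · exact absurd (hq'.trans hr'.symm) h2

lemma min_four {b : Set (X₁ × X₂)} (hb : b ∈ circProd X₁ X₂) {q r s p : X₁ × X₂}
    (g1 : q.1 ≠ r.1) (g2 : q.1 ≠ s.1) (g3 : r.1 ≠ s.1)
    (g4 : q.2 ≠ r.2) (g5 : q.2 ≠ s.2) (g6 : r.2 ≠ s.2)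
    (hpq : p ≠ q) (hpr : p ≠ r) (hps : p ≠ s)
    (hqb : q ∈ b) (hrb : r ∈ b) (hsb : s ∈ b) (hpb : p ∈ b) : univ ⊆ b := by
  have hqr : q ≠ r := fun h => g1 (h ▸ rfl)
  have hqs : q ≠ s := fun h => g2 (h ▸ rfl)
  have hrs : r ≠ s := fun h => g3 (h ▸ rfl)
  rcases circ_classify hb with rfl | rfl | ⟨t, rfl⟩ | ⟨u, v, rfl, k1, k2⟩ |
      ⟨u, v, w, rfl, k1, k2, k3, k4, k5, k6⟩ | ⟨x, rfl⟩ | ⟨y, rfl⟩ | ⟨x, y, rfl⟩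
  · exact absurd hqb (Set.notMem_empty q)
  · exact Subset.rfl
  · exact absurd ((show q = t from hqb).trans (show r = t from hrb).symm) hqr
  · exact (three_in_pair hqb hrb hsb hqr hqs hrs).elim
  · exact (four_in_triple hqb hrb hsb hpb hqr hqs hrs hpq hpr hps).elim
  · exact absurd ((show q.1 = x from hqb).trans (show r.1 = x from hrb).symm) g1
  · exact absurd ((show q.2 = y from hqb).trans (show r.2 = y from hrb).symm) g4
  · exact (three_in_cross hqb hrb hsb g1 g2 g3 g4 g5 g6).elim

lemma min_vert {b : Set (X₁ × X₂)} (hb : b ∈ circProd X₁ X₂) {x : X₁} {p : X₁ × X₂}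
    (hp1 : p.1 ≠ x) (hVb : Vl x ⊆ b) (hpb : p ∈ b) : Cl x p.2 ⊆ b := by
  intro s hs
  rcases (hs : s.1 = x ∨ s.2 = p.2) with h | h
  · exact hVb h
  · have hwb : ((x, p.2) : X₁ × X₂) ∈ b := hVb rfl
    have hne : p ≠ ((x, p.2) : X₁ × X₂) := fun hh => hp1 (congrArg Prod.fst hh)
    rcases circ_classify hb with rfl | rfl | ⟨z, rfl⟩ | ⟨u, v, rfl, g1, g2⟩ |
        ⟨u, v, w, rfl, g1, g2, g3, g4, g5, g6⟩ | ⟨x', rfl⟩ | ⟨y, rfl⟩ | ⟨x', y, rfl⟩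
    · exact absurd hwb (Set.notMem_empty _)
    · trivial
    · exact absurd ((show p = z from hpb).trans (show ((x, p.2) : X₁ × X₂) = z from hwb).symm) hne
    · exact absurd rfl (pair_pts g1 g2 hpb hwb hne).2
    · exact absurd rfl (triple_pts g1 g2 g3 g4 g5 g6 hpb hwb hne).2
    · exact absurd ((show p.1 = x' from hpb).trans
        (show ((x, p.2) : X₁ × X₂).1 = x' from hwb).symm) hp1
    · exact (h.trans (show p.2 = y from hpb) : s.2 = y)
    · have hpC : p.1 = x' ∨ p.2 = y := hpb
      have hwC : x = x' ∨ p.2 = y := hwb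
      rcases hpC with h' | h'
      · rcases hwC with h'' | h''
        · exact absurd (h'.trans h''.symm) hp1
        · exact Or.inr (h.trans h'')
      · exact Or.inr (h.trans h')

lemma min_horiz {b : Set (X₁ × X₂)} (hb : b ∈ circProd X₁ X₂) {y : X₂} {p : X₁ × X₂}
    (hp2 : p.2 ≠ y) (hHb : Hl y ⊆ b) (hpb : p ∈ b) : Cl p.1 y ⊆ b := by
  intro s hs
  rcases (hs : s.1 = p.1 ∨ s.2 = y) with h | h
  case inr => exact hHb h
  case inl =>
    have hwb : ((p.1, y) : X₁ × X₂) ∈ b := hHb rfl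
    have hne : p ≠ ((p.1, y) : X₁ × X₂) := fun hh => hp2 (congrArg Prod.snd hh)
    rcases circ_classify hb with rfl | rfl | ⟨z, rfl⟩ | ⟨u, v, rfl, g1, g2⟩ |
        ⟨u, v, w, rfl, g1, g2, g3, g4, g5, g6⟩ | ⟨x', rfl⟩ | ⟨y', rfl⟩ | ⟨x', y', rfl⟩
    · exact absurd hwb (Set.notMem_empty _)
    · trivial
    · exact absurd ((show p = z from hpb).trans (show ((p.1, y) : X₁ × X₂) = z from hwb).symm) hne
    · exact absurd rfl (pair_pts g1 g2 hpb hwb hne).1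
    · exact absurd rfl (triple_pts g1 g2 g3 g4 g5 g6 hpb hwb hne).1
    · exact (h.trans (show p.1 = x' from hpb) : s.1 = x')
    · exact absurd ((show p.2 = y' from hpb).trans
        (show ((p.1, y) : X₁ × X₂).2 = y' from hwb).symm) hp2
    · have hpC : p.1 = x' ∨ p.2 = y' := hpb
      have hwC : p.1 = x' ∨ y = y' := hwb
      rcases hpC with f | f
      · exact Or.inl (h.trans f)
      · rcases hwC with g | g
        · exact Or.inl (h.trans g)
        · exact absurd (f.trans g.symm) hp2

lemma min_cross {b : Set (X₁ × X₂)} (hb : b ∈ circProd X₁ X₂) {x : X₁} {y : X₂} {p : X₁ × X₂}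
    (hp1 : p.1 ≠ x) (hp2 : p.2 ≠ y) (hCb : Cl x y ⊆ b) (hpb : p ∈ b) : univ ⊆ b := by
  have hw1 : ((x, y) : X₁ × X₂) ∈ b := hCb (Or.inl rfl)
  have hw2 : ((x, p.2) : X₁ × X₂) ∈ b := hCb (Or.inl rfl)
  have hw3 : ((p.1, y) : X₁ × X₂) ∈ b := hCb (Or.inr rfl)
  have h12 : ((x, y) : X₁ × X₂) ≠ (x, p.2) := fun h => hp2 (congrArg Prod.snd h).symm
  rcases circ_classify hb with rfl | rfl | ⟨t, rfl⟩ | ⟨u, v, rfl, k1, k2⟩ |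
      ⟨u, v, w, rfl, k1, k2, k3, k4, k5, k6⟩ | ⟨x', rfl⟩ | ⟨y', rfl⟩ | ⟨x', y', rfl⟩
  · exact absurd hw1 (Set.notMem_empty _)
  · exact Subset.rfl
  · exact absurd ((show ((x, y) : X₁ × X₂) = t from hw1).trans
      (show ((x, p.2) : X₁ × X₂) = t from hw2).symm) h12
  · exact absurd rfl (pair_pts k1 k2 hw1 hw2 h12).1
  · exact absurd rfl (triple_pts k1 k2 k3 k4 k5 k6 hw1 hw2 h12).1
  · exact absurd ((show p.1 = x' from hw3).trans
      (show ((x, y) : X₁ × X₂).1 = x' from hw1).symm) hp1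
  · exact absurd ((show p.2 = y' from hw2).trans
      (show ((x, y) : X₁ × X₂).2 = y' from hw1).symm) hp2
  · exfalso
    have hw1C : x = x' ∨ y = y' := hw1
    have hpC : p.1 = x' ∨ p.2 = y' := hpb
    rcases hw1C with e | e
    · rcases hpC with f | f
      · exact hp1 (f.trans e.symm)
      · have hw3C : p.1 = x' ∨ y = y' := hw3
        rcases hw3C with g | g
        · exact hp1 (g.trans e.symm)
        · exact hp2 (f.trans g.symm)
    · rcases hpC with f | f
      · have hw2C : x = x' ∨ p.2 = y' := hw2
        rcases hw2C with g | g
        · exact hp1 (f.trans g.symm)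
        · exact hp2 (g.trans e.symm)
      · exact hp2 (f.trans e.symm)

/-! ### step lemmas: no element strictly between -/

lemma step_col {c : Set (X₁ × X₂)} (hc : c ∈ circProd X₁ X₂) {p q : X₁ × X₂}
    (e : p.1 = q.1) (hqc : q ∈ c) (hcj : c ⊆ Vl q.1) : p ∈ c ∨ c ⊆ {q} := by
  rcases circ_classify hc with rfl | rfl | ⟨z, rfl⟩ | ⟨u, v, rfl, g1, g2⟩ |
      ⟨u, v, w, rfl, g1, g2, g3, g4, g5, g6⟩ | ⟨x, rfl⟩ | ⟨y, rfl⟩ | ⟨x, y, rfl⟩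
  · exact absurd hqc (Set.notMem_empty q)
  · exact Or.inl trivial
  · right
    intro r hr
    exact Set.mem_singleton_iff.2 ((hr : r = z).trans (show q = z from hqc).symm)
  · exact absurd ((hcj (Set.mem_insert u _) : u.1 = q.1).trans
      (hcj (Set.mem_insert_of_mem _ rfl) : v.1 = q.1).symm) g1
  · exact absurd ((hcj (Set.mem_insert u _) : u.1 = q.1).trans
      (hcj (Set.mem_insert_of_mem _ (Set.mem_insert v _)) : v.1 = q.1).symm) g1
  · exact Or.inl (show p.1 = x from e.trans (show q.1 = x from hqc))
  · right
    intro r hr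
    have h1 : r.1 = q.1 := hcj hr
    have h2 : r.2 = y := hr
    have h3 : q.2 = y := hqc
    exact Set.mem_singleton_iff.2 (Prod.ext h1 (h2.trans h3.symm))
  · left
    have hx : x = q.1 := hcj (show ((x, q.2) : X₁ × X₂) ∈ Cl x y from Or.inl rfl)
    exact Or.inl (e.trans hx.symm)

lemma step_row {c : Set (X₁ × X₂)} (hc : c ∈ circProd X₁ X₂) {p q : X₁ × X₂}
    (e : p.2 = q.2) (hqc : q ∈ c) (hcj : c ⊆ Hl q.2) : p ∈ c ∨ c ⊆ {q} := by
  rcases circ_classify hc with rfl | rfl | ⟨z, rfl⟩ | ⟨u, v, rfl, g1, g2⟩ |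
      ⟨u, v, w, rfl, g1, g2, g3, g4, g5, g6⟩ | ⟨x, rfl⟩ | ⟨y, rfl⟩ | ⟨x, y, rfl⟩
  · exact absurd hqc (Set.notMem_empty q)
  · exact Or.inl trivial
  · right
    intro r hr
    exact Set.mem_singleton_iff.2 ((hr : r = z).trans (show q = z from hqc).symm)
  · exact absurd ((hcj (Set.mem_insert u _) : u.2 = q.2).trans
      (hcj (Set.mem_insert_of_mem _ rfl) : v.2 = q.2).symm) g2
  · exact absurd ((hcj (Set.mem_insert u _) : u.2 = q.2).trans
      (hcj (Set.mem_insert_of_mem _ (Set.mem_insert v _)) : v.2 = q.2).symm) g4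
  · right
    intro r hr
    have h1 : r.1 = x := hr
    have h2 : q.1 = x := hqc
    have h3 : r.2 = q.2 := hcj hr
    exact Set.mem_singleton_iff.2 (Prod.ext (h1.trans h2.symm) h3)
  · exact Or.inl (show p.2 = y from e.trans (show q.2 = y from hqc))
  · left
    have hy : y = q.2 := hcj (show ((q.1, y) : X₁ × X₂) ∈ Cl x y from Or.inr rfl)
    exact Or.inr (e.trans hy.symm)

lemma step_pair {c : Set (X₁ × X₂)} (hc : c ∈ circProd X₁ X₂) {q r p : X₁ × X₂}
    (h1 : q.1 ≠ r.1) (h2 : q.2 ≠ r.2) (hqr : q ≠ r) (hshare : p.1 = q.1 ∨ p.2 = r.2)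
    (hqc : q ∈ c) (hrc : r ∈ c) (hcj : c ⊆ Cl q.1 r.2) : p ∈ c ∨ c ⊆ {q, r} := by
  rcases circ_classify hc with rfl | rfl | ⟨t, rfl⟩ | ⟨u, v, rfl, k1, k2⟩ |
      ⟨u, v, w, rfl, k1, k2, k3, k4, k5, k6⟩ | ⟨x, rfl⟩ | ⟨y, rfl⟩ | ⟨x, y, rfl⟩
  · exact absurd hqc (Set.notMem_empty q)
  · exact Or.inl trivial
  · exact absurd ((show q = t from hqc).trans (show r = t from hrc).symm) hqr
  · right
    simp only [Set.mem_insert_iff, Set.mem_singleton_iff] at hqc hrc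
    rcases hqc with rfl | rfl
    · rcases hrc with rfl | rfl
      · exact absurd rfl hqr
      · exact Subset.rfl
    · rcases hrc with rfl | rfl
      · rw [Set.pair_comm q r]
      · exact absurd rfl hqr
  · exact (three_in_cross (hcj (Set.mem_insert u _))
      (hcj (Set.mem_insert_of_mem _ (Set.mem_insert v _)))
      (hcj (Set.mem_insert_of_mem _ (Set.mem_insert_of_mem _ rfl))) k1 k2 k3 k4 k5 k6).elim
  · exact absurd ((show q.1 = x from hqc).trans (show r.1 = x from hrc).symm) h1
  · exact absurd ((show q.2 = y from hqc).trans (show r.2 = y from hrc).symm) h2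
  · have hqC : q.1 = x ∨ q.2 = y := hqc
    have hrC : r.1 = x ∨ r.2 = y := hrc
    rcases hqC with f | f
    · rcases hrC with g | g
      · exact absurd (f.trans g.symm) h1
      · left
        rcases hshare with hs | hs
        · exact Or.inl (hs.trans f)
        · exact Or.inr (hs.trans g)
    · rcases hrC with g | g
      · exfalso
        rcases (hcj (show ((x, y) : X₁ × X₂) ∈ Cl x y from Or.inl rfl) :
            x = q.1 ∨ y = r.2) with e' | e'
        · exact h1 (g.trans e').symm
        · exact h2 (f.trans e')
      · exact absurd (f.trans g.symm) h2

lemma step_vert {c : Set (X₁ × X₂)} (hc : c ∈ circProd X₁ X₂) {x : X₁} {p : X₁ × X₂}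
    (hp1 : p.1 ≠ x) (hVc : Vl x ⊆ c) (hcj : c ⊆ Cl x p.2) : p ∈ c ∨ c ⊆ Vl x := by
  by_cases hsub : c ⊆ Vl x
  · exact Or.inr hsub
  left
  obtain ⟨z, hzc, hz1⟩ : ∃ z ∈ c, ¬z.1 = x := Set.not_subset.1 hsub
  have hz2 : z.2 = p.2 := by
    rcases (hcj hzc : z.1 = x ∨ z.2 = p.2) with h | h
    · exact absurd h hz1
    · exact h
  have hwc : ((x, z.2) : X₁ × X₂) ∈ c := hVc rfl
  have hzw : z ≠ ((x, z.2) : X₁ × X₂) := fun h => hz1 (congrArg Prod.fst h)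
  rcases circ_classify hc with rfl | rfl | ⟨t, rfl⟩ | ⟨u, v, rfl, g1, g2⟩ |
      ⟨u, v, w, rfl, g1, g2, g3, g4, g5, g6⟩ | ⟨x', rfl⟩ | ⟨y, rfl⟩ | ⟨x', y, rfl⟩
  · exact absurd hzc (Set.notMem_empty z)
  · trivial
  · exact absurd ((show z = t from hzc).trans (show ((x, z.2) : X₁ × X₂) = t from hwc).symm) hzw
  · exact absurd rfl (pair_pts g1 g2 hzc hwc hzw).2
  · exact absurd rfl (triple_pts g1 g2 g3 g4 g5 g6 hzc hwc hzw).2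
  · exact absurd ((show z.1 = x' from hzc).trans
      (show ((x, z.2) : X₁ × X₂).1 = x' from hwc).symm) hz1
  · exact (hz2.symm.trans (show ((x, z.2) : X₁ × X₂).2 = y from hwc) : p.2 = y)
  · have hzC : z.1 = x' ∨ z.2 = y := hzc
    have hwC : x = x' ∨ z.2 = y := hwc
    rcases hzC with h | h
    · rcases hwC with h' | h'
      · exact absurd (h.trans h'.symm) hz1
      · exact Or.inr (hz2.symm.trans h')
    · exact Or.inr (hz2.symm.trans h)

lemma step_horiz {c : Set (X₁ × X₂)} (hc : c ∈ circProd X₁ X₂) {y : X₂} {p : X₁ × X₂}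
    (hp2 : p.2 ≠ y) (hHc : Hl y ⊆ c) (hcj : c ⊆ Cl p.1 y) : p ∈ c ∨ c ⊆ Hl y := by
  by_cases hsub : c ⊆ Hl y
  · exact Or.inr hsub
  left
  obtain ⟨z, hzc, hz2⟩ : ∃ z ∈ c, ¬z.2 = y := Set.not_subset.1 hsub
  have hz1 : z.1 = p.1 := by
    rcases (hcj hzc : z.1 = p.1 ∨ z.2 = y) with h | h
    · exact h
    · exact absurd h hz2
  have hwc : ((z.1, y) : X₁ × X₂) ∈ c := hHc rfl
  have hzw : z ≠ ((z.1, y) : X₁ × X₂) := fun h => hz2 (congrArg Prod.snd h)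
  rcases circ_classify hc with rfl | rfl | ⟨t, rfl⟩ | ⟨u, v, rfl, g1, g2⟩ |
      ⟨u, v, w, rfl, g1, g2, g3, g4, g5, g6⟩ | ⟨x', rfl⟩ | ⟨y', rfl⟩ | ⟨x', y', rfl⟩
  · exact absurd hzc (Set.notMem_empty z)
  · trivial
  · exact absurd ((show z = t from hzc).trans (show ((z.1, y) : X₁ × X₂) = t from hwc).symm) hzw
  · exact absurd rfl (pair_pts g1 g2 hzc hwc hzw).1
  · exact absurd rfl (triple_pts g1 g2 g3 g4 g5 g6 hzc hwc hzw).1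
  · exact (hz1.symm.trans (show ((z.1, y) : X₁ × X₂).1 = x' from hwc) : p.1 = x')
  · exact absurd ((show z.2 = y' from hzc).trans
      (show ((z.1, y) : X₁ × X₂).2 = y' from hwc).symm) hz2
  · have hzC : z.1 = x' ∨ z.2 = y' := hzc
    rcases hzC with f | f
    · exact Or.inl (hz1.symm.trans f)
    · have hwC : z.1 = x' ∨ y = y' := hwc
      rcases hwC with g | g
      · exact Or.inl (hz1.symm.trans g)
      · exact absurd (f.trans g.symm) hz2

end AuxCover
section AuxFinal

open Set

variable {X₁ X₂ : Type*}

lemma cover_sing (p q : X₁ × X₂) (hpq : p ≠ q) :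
    CoversIn (circProd X₁ X₂) {q} (sJoin (circProd X₁ X₂) (insert p {q})) := by
  have hpa : p ∉ ({q} : Set (X₁ × X₂)) := by simpa using hpq
  by_cases e1 : p.1 = q.1
  · have hj : sJoin (circProd X₁ X₂) (insert p {q}) = Vl q.1 :=
      sJoin_eq (Vl_mem_circ q.1)
        (Set.insert_subset (show p ∈ (Vl q.1 : Set (X₁ × X₂)) from e1)
          (Set.singleton_subset_iff.2 (show q ∈ (Vl q.1 : Set (X₁ × X₂)) from rfl)))
        (fun b hb hsub => min_col hb hpq e1 (hsub (Set.mem_insert p _))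
          (hsub (Set.mem_insert_of_mem _ rfl)))
    refine coversIn_sJoin hpa ?_
    intro c hc hac hcj
    rw [hj] at hcj
    exact step_col hc e1 (hac rfl) hcj
  · by_cases e2 : p.2 = q.2
    · have hj : sJoin (circProd X₁ X₂) (insert p {q}) = Hl q.2 :=
        sJoin_eq (Hl_mem_circ q.2)
          (Set.insert_subset (show p ∈ (Hl q.2 : Set (X₁ × X₂)) from e2)
            (Set.singleton_subset_iff.2 (show q ∈ (Hl q.2 : Set (X₁ × X₂)) from rfl)))
          (fun b hb hsub => min_row hb hpq e2 (hsub (Set.mem_insert p _))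
            (hsub (Set.mem_insert_of_mem _ rfl)))
      refine coversIn_sJoin hpa ?_
      intro c hc hac hcj
      rw [hj] at hcj
      exact step_row hc e2 (hac rfl) hcj
    · have hj : sJoin (circProd X₁ X₂) (insert p {q}) = {p, q} :=
        sJoin_eq (pair_mem_circ e1 e2) Subset.rfl (fun b hb hsub => hsub)
      refine coversIn_sJoin hpa ?_
      intro c hc hac hcj
      rw [hj] at hcj
      exact step_insert hcj

lemma cover_pairA {q r p : X₁ × X₂} (h1 : q.1 ≠ r.1) (h2 : q.2 ≠ r.2)
    (hpq : p ≠ q) (hpr : p ≠ r) (hshare : p.1 = q.1 ∨ p.2 = r.2) :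
    CoversIn (circProd X₁ X₂) {q, r} (sJoin (circProd X₁ X₂) (insert p {q, r})) := by
  have hqr : q ≠ r := fun h => h1 (h ▸ rfl)
  have hpa : p ∉ ({q, r} : Set (X₁ × X₂)) := by simp [hpq, hpr]
  have hj : sJoin (circProd X₁ X₂) (insert p {q, r}) = Cl q.1 r.2 :=
    sJoin_eq (Cl_mem_circ q.1 r.2)
      (Set.insert_subset (show p ∈ (Cl q.1 r.2 : Set (X₁ × X₂)) from hshare)
        (Set.insert_subset (Or.inl rfl) (Set.singleton_subset_iff.2 (Or.inr rfl))))
      (fun b hb hsub => min_pair hb h1 h2 hpq hpr hshare (hsub (Set.mem_insert p _))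
        (hsub (Set.mem_insert_of_mem _ (Set.mem_insert q _)))
        (hsub (Set.mem_insert_of_mem _ (Set.mem_insert_of_mem _ rfl))))
  refine coversIn_sJoin hpa ?_
  intro c hc hac hcj
  rw [hj] at hcj
  exact step_pair hc h1 h2 hqr hshare (hac (Set.mem_insert q _))
    (hac (Set.mem_insert_of_mem _ rfl)) hcj

lemma cover_pair {q r p : X₁ × X₂} (h1 : q.1 ≠ r.1) (h2 : q.2 ≠ r.2)
    (hpa : p ∉ ({q, r} : Set (X₁ × X₂))) :
    CoversIn (circProd X₁ X₂) {q, r} (sJoin (circProd X₁ X₂) (insert p {q, r})) := by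
  have hp' : ¬(p = q ∨ p = r) := by simpa using hpa
  have hpq : p ≠ q := fun h => hp' (Or.inl h)
  have hpr : p ≠ r := fun h => hp' (Or.inr h)
  by_cases A1 : p.1 = q.1 ∨ p.2 = r.2
  · exact cover_pairA h1 h2 hpq hpr A1
  · by_cases A2 : p.1 = r.1 ∨ p.2 = q.2
    · have := cover_pairA h1.symm h2.symm hpr hpq A2
      rwa [Set.pair_comm r q] at this
    · push_neg at A1 A2
      have hj : sJoin (circProd X₁ X₂) (insert p {q, r}) = {p, q, r} :=
        sJoin_eq (triple_mem_circ A1.1 A2.1 h1 A2.2 A1.2 h2) Subset.rfl (fun b hb hsub => hsub)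
      refine coversIn_sJoin hpa ?_
      intro c hc hac hcj
      rw [hj] at hcj
      exact step_insert hcj

lemma cover_triple {q r s p : X₁ × X₂} (g1 : q.1 ≠ r.1) (g2 : q.1 ≠ s.1) (g3 : r.1 ≠ s.1)
    (g4 : q.2 ≠ r.2) (g5 : q.2 ≠ s.2) (g6 : r.2 ≠ s.2)
    (hpa : p ∉ ({q, r, s} : Set (X₁ × X₂))) :
    CoversIn (circProd X₁ X₂) {q, r, s} (sJoin (circProd X₁ X₂) (insert p {q, r, s})) := by
  have hp' : ¬(p = q ∨ p = r ∨ p = s) := by simpa using hpa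
  have hpq : p ≠ q := fun h => hp' (Or.inl h)
  have hpr : p ≠ r := fun h => hp' (Or.inr (Or.inl h))
  have hps : p ≠ s := fun h => hp' (Or.inr (Or.inr h))
  have hqr : q ≠ r := fun h => g1 (h ▸ rfl)
  have hqs : q ≠ s := fun h => g2 (h ▸ rfl)
  have hrs : r ≠ s := fun h => g3 (h ▸ rfl)
  have hj : sJoin (circProd X₁ X₂) (insert p {q, r, s}) = univ :=
    sJoin_eq univ_mem_circ (Set.subset_univ _)
      (fun b hb hsub => min_four hb g1 g2 g3 g4 g5 g6 hpq hpr hps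
        (hsub (Set.mem_insert_of_mem _ (Set.mem_insert q _)))
        (hsub (Set.mem_insert_of_mem _ (Set.mem_insert_of_mem _ (Set.mem_insert r _))))
        (hsub (Set.mem_insert_of_mem _ (Set.mem_insert_of_mem _ (Set.mem_insert_of_mem _ rfl))))
        (hsub (Set.mem_insert p _)))
  refine coversIn_sJoin hpa ?_
  intro c hc hac hcj
  by_cases hsub : c ⊆ {q, r, s}
  · exact Or.inr hsub
  left
  obtain ⟨z, hzc, hz⟩ := Set.not_subset.1 hsub
  have hz' : ¬(z = q ∨ z = r ∨ z = s) := by simpa using hz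
  have hzq : z ≠ q := fun h => hz' (Or.inl h)
  have hzr : z ≠ r := fun h => hz' (Or.inr (Or.inl h))
  have hzs : z ≠ s := fun h => hz' (Or.inr (Or.inr h))
  have hqc : q ∈ c := hac (Set.mem_insert q _)
  have hrc : r ∈ c := hac (Set.mem_insert_of_mem _ (Set.mem_insert r _))
  have hsc : s ∈ c := hac (Set.mem_insert_of_mem _ (Set.mem_insert_of_mem _ rfl))
  rcases circ_classify hc with rfl | rfl | ⟨t, rfl⟩ | ⟨u, v, rfl, k1, k2⟩ |
      ⟨u, v, w, rfl, k1, k2, k3, k4, k5, k6⟩ | ⟨x, rfl⟩ | ⟨y, rfl⟩ | ⟨x, y, rfl⟩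
  · exact absurd hqc (Set.notMem_empty q)
  · trivial
  · exact absurd ((show q = t from hqc).trans (show r = t from hrc).symm) hqr
  · exact (three_in_pair hqc hrc hsc hqr hqs hrs).elim
  · exact (four_in_triple hqc hrc hsc hzc hqr hqs hrs hzq hzr hzs).elim
  · exact absurd ((show q.1 = x from hqc).trans (show r.1 = x from hrc).symm) g1
  · exact absurd ((show q.2 = y from hqc).trans (show r.2 = y from hrc).symm) g4
  · exact (three_in_cross hqc hrc hsc g1 g2 g3 g4 g5 g6).elim

lemma cover_vert (x : X₁) {p : X₁ × X₂} (hp1 : p.1 ≠ x) :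
    CoversIn (circProd X₁ X₂) (Vl x) (sJoin (circProd X₁ X₂) (insert p (Vl x))) := by
  have hpa : p ∉ (Vl x : Set (X₁ × X₂)) := hp1
  have hj : sJoin (circProd X₁ X₂) (insert p (Vl x)) = Cl x p.2 :=
    sJoin_eq (Cl_mem_circ x p.2)
      (Set.insert_subset (Or.inr rfl) (fun r hr => Or.inl hr))
      (fun b hb hsub => min_vert hb hp1 (fun r hr => hsub (Set.mem_insert_of_mem _ hr))
        (hsub (Set.mem_insert p _)))
  refine coversIn_sJoin hpa ?_
  intro c hc hac hcj
  rw [hj] at hcj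
  exact step_vert hc hp1 hac hcj

lemma cover_horiz (y : X₂) {p : X₁ × X₂} (hp2 : p.2 ≠ y) :
    CoversIn (circProd X₁ X₂) (Hl y) (sJoin (circProd X₁ X₂) (insert p (Hl y))) := by
  have hpa : p ∉ (Hl y : Set (X₁ × X₂)) := hp2
  have hj : sJoin (circProd X₁ X₂) (insert p (Hl y)) = Cl p.1 y :=
    sJoin_eq (Cl_mem_circ p.1 y)
      (Set.insert_subset (Or.inl rfl) (fun r hr => Or.inr hr))
      (fun b hb hsub => min_horiz hb hp2 (fun r hr => hsub (Set.mem_insert_of_mem _ hr))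
        (hsub (Set.mem_insert p _)))
  refine coversIn_sJoin hpa ?_
  intro c hc hac hcj
  rw [hj] at hcj
  exact step_horiz hc hp2 hac hcj

lemma cover_cross (x : X₁) (y : X₂) {p : X₁ × X₂} (hp1 : p.1 ≠ x) (hp2 : p.2 ≠ y) :
    CoversIn (circProd X₁ X₂) (Cl x y) (sJoin (circProd X₁ X₂) (insert p (Cl x y))) := by
  have hpa : p ∉ (Cl x y : Set (X₁ × X₂)) := fun h => h.elim hp1 hp2
  have hj : sJoin (circProd X₁ X₂) (insert p (Cl x y)) = univ :=
    sJoin_eq univ_mem_circ (Set.subset_univ _)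
      (fun b hb hsub => min_cross hb hp1 hp2 (fun r hr => hsub (Set.mem_insert_of_mem _ hr))
        (hsub (Set.mem_insert p _)))
  refine coversIn_sJoin hpa ?_
  intro c hc hac hcj
  by_cases hsub : c ⊆ Cl x y
  · exact Or.inr hsub
  left
  obtain ⟨z, hzc, hz⟩ := Set.not_subset.1 hsub
  have hz1 : z.1 ≠ x := fun h => hz (Or.inl h)
  have hz2 : z.2 ≠ y := fun h => hz (Or.inr h)
  have hw1 : ((x, y) : X₁ × X₂) ∈ c := hac (Or.inl rfl)
  have hw2 : ((x, z.2) : X₁ × X₂) ∈ c := hac (Or.inl rfl)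
  have hw3 : ((z.1, y) : X₁ × X₂) ∈ c := hac (Or.inr rfl)
  have h12 : ((x, y) : X₁ × X₂) ≠ (x, z.2) := fun h => hz2 (congrArg Prod.snd h).symm
  rcases circ_classify hc with rfl | rfl | ⟨t, rfl⟩ | ⟨u, v, rfl, k1, k2⟩ |
      ⟨u, v, w, rfl, k1, k2, k3, k4, k5, k6⟩ | ⟨x', rfl⟩ | ⟨y', rfl⟩ | ⟨x', y', rfl⟩
  · exact absurd hzc (Set.notMem_empty z)
  · trivial
  · exact absurd ((show ((x, y) : X₁ × X₂) = t from hw1).trans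
      (show ((x, z.2) : X₁ × X₂) = t from hw2).symm) h12
  · exact absurd rfl (pair_pts k1 k2 hw1 hw2 h12).1
  · exact absurd rfl (triple_pts k1 k2 k3 k4 k5 k6 hw1 hw2 h12).1
  · exact absurd ((show z.1 = x' from hzc).trans
      (show ((x, y) : X₁ × X₂).1 = x' from hw1).symm) hz1
  · exact absurd ((show ((x, z.2) : X₁ × X₂).2 = y' from hw2).trans
      (show ((x, y) : X₁ × X₂).2 = y' from hw1).symm) hz2
  · exfalso
    have hw1C : x = x' ∨ y = y' := hw1
    have hzC : z.1 = x' ∨ z.2 = y' := hzc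
    rcases hw1C with e | e
    · rcases hzC with f | f
      · exact hz1 (f.trans e.symm)
      · have hw3C : z.1 = x' ∨ y = y' := hw3
        rcases hw3C with g | g
        · exact hz1 (g.trans e.symm)
        · exact hz2 (f.trans g.symm)
    · rcases hzC with f | f
      · have hw2C : x = x' ∨ z.2 = y' := hw2
        rcases hw2C with g | g
        · exact hz1 (f.trans g.symm)
        · exact hz2 (g.trans e.symm)
      · exact hz2 (f.trans e.symm)

lemma circ_cov : HasCovProp (circProd X₁ X₂) := by
  intro p a ha hpa
  rcases circ_classify ha with rfl | rfl | ⟨q, rfl⟩ | ⟨q, r, rfl, h1, h2⟩ |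
      ⟨q, r, s, rfl, g1, g2, g3, g4, g5, g6⟩ | ⟨x, rfl⟩ | ⟨y, rfl⟩ | ⟨x, y, rfl⟩
  · have hj : sJoin (circProd X₁ X₂) (insert p ∅) = {p} :=
      sJoin_eq (sing_mem_circ p) (by simp)
        (fun b hb hsub => Set.singleton_subset_iff.2 (hsub (Set.mem_insert p _)))
    refine coversIn_sJoin hpa ?_
    intro c hc hac hcj
    rw [hj] at hcj
    rcases Set.subset_singleton_iff_eq.1 hcj with rfl | rfl
    · exact Or.inr Subset.rfl
    · exact Or.inl rfl
  · exact absurd trivial hpa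
  · exact cover_sing p q (by simpa using hpa)
  · exact cover_pair h1 h2 hpa
  · exact cover_triple g1 g2 g3 g4 g5 g6 hpa
  · exact cover_vert x (fun h => hpa h)
  · exact cover_horiz y (fun h => hpa h)
  · exact cover_cross x y (fun h => hpa (Or.inl h)) (fun h => hpa (Or.inr h))

end AuxFinal
/-- `MO_{Σ₁} ∘ MO_{Σ₂}` is a weak tensor product of `MO_{Σ₁}` and
`MO_{Σ₂}` having the covering property. -/
theorem stmt_18 {X₁ X₂ : Type*} [Nonempty X₁] [Nonempty X₂] :
    IsWTP₂ (MOspace X₁) (MOspace X₂) (circProd X₁ X₂) ∧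
      HasCovProp (circProd X₁ X₂) := by
  exact ⟨⟨circ_SCS, circ_P1, circ_P2, circ_P3⟩, circ_cov⟩
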